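/- For any ρ₁ ≤ ρ₂ in Θ₀ and any partition B of D_n, the matrix Δ^B(ρ₁,ρ₂) = L^B_{n,m}(ρ₂) − L^B_{n,m}(ρ₁) is symmetric positive semidefinite; equivalently, the map ρ ↦ L^B_{n,m}(ρ) is monotone nondecreasing on Θ₀ in the positive semidefinite (Loewner) order. (Monotonicity claim established in Eq. (B.8) of the proof of Lemma B.3.) -/

import Mathlib

open MeasureTheory ProbabilityTheory Filter Matrix BoundedContinuousFunction
open scoped BigOperators ENNReal NNReal Topology Classical

noncomputable section

/-- Points of `ℝ^d` with the Euclidean structure. -/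
abbrev Pt (d : ℕ) := EuclideanSpace ℝ (Fin d)

/-- `N = ⌊n^(1/d)⌋`. -/
def Nof (d n : ℕ) : ℕ := Nat.floor ((n : ℝ) ^ ((1 : ℝ) / (d : ℝ)))

/-- Quasi-uniformity of the `n`-point sampling set `D ⊂ ℝ^d`: for every `s ∈ D` there is an
enumeration of `D \ {s}` which is monotone in the distance to `s` (so that its `i`-th element is
the `i`-th nearest neighbour of `s`), whose distances obey the two-sided bound
`Cmin (i/n)^{1/d} ≤ r_{s,i} ≤ Cmax (i/n)^{1/d}`. -/
def QuasiUniform (d n : ℕ) (Cmin Cmax : ℝ) (D : Finset (Pt d)) : Prop :=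
  D.card = n ∧
  ∀ s ∈ D, ∃ g : Fin (n - 1) → Pt d,
    (∀ i, g i ∈ D.erase s) ∧ Function.Injective g ∧
    (∀ t ∈ D.erase s, ∃ i, g i = t) ∧
    (∀ i j : Fin (n - 1), i ≤ j → dist s (g i) ≤ dist s (g j)) ∧
    (∀ i : Fin (n - 1),
      Cmin * (((i : ℕ) + 1 : ℝ) / (n : ℝ)) ^ ((1 : ℝ) / (d : ℝ)) ≤ dist s (g i) ∧
      dist s (g i) ≤ Cmax * (((i : ℕ) + 1 : ℝ) / (n : ℝ)) ^ ((1 : ℝ) / (d : ℝ)))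

/-- Preconditioning neighbourhoods `nb` and coefficients `a` of order `m` for the set `D`:
each `N_m(s) = nb s` lies in `D` within distance `c₀/N` of `s`; the coefficients annihilate all
monomials `(t-s)^r` with `|r|₁ < m`, do not annihilate some monomial with `|r|₁ ≥ m`, and are
normalized in Euclidean norm. -/
def PrecondCoeffs (d m : ℕ) (c₀ : ℝ) (N : ℕ) (D : Finset (Pt d))
    (nb : Pt d → Finset (Pt d)) (a : Pt d → Pt d → ℝ) : Prop :=
  ∀ s ∈ D,
    nb s ⊆ D ∧
    (∀ t ∈ nb s, ‖t - s‖ ≤ c₀ / (N : ℝ)) ∧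
    (∀ r : Fin d → ℕ, (∑ j, r j) < m →
      (∑ t ∈ nb s, a s t * ∏ j, (t j - s j) ^ r j) = 0) ∧
    (∃ r : Fin d → ℕ, m ≤ (∑ j, r j) ∧
      (∑ t ∈ nb s, a s t * ∏ j, (t j - s j) ^ r j) ≠ 0) ∧
    (∑ t ∈ nb s, (a s t) ^ 2) = 1

/-- The Fourier filter `f^N_s(ω)` of the preconditioning coefficients. -/
def fN (d : ℕ) (ν : ℝ) (N : ℕ) (nb : Pt d → Finset (Pt d))
    (a : Pt d → Pt d → ℝ) (s ω : Pt d) : ℂ :=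
  ((‖ω‖ ^ (-(ν + (d : ℝ) / 2)) : ℝ) : ℂ) *
    ∑ t ∈ nb s, ((a s t : ℝ) : ℂ) *
      Complex.exp (Complex.I * ((inner ℝ ((N : ℝ) • ω) (t - s) : ℝ) : ℂ))

/-- `h_N(x) = (1 + (Nx)^{-2})^{-(ν + d/2)}`. -/
def hN (d : ℕ) (ν : ℝ) (N : ℕ) (x : ℝ) : ℝ :=
  (1 + ((N : ℝ) * x) ^ (-(2 : ℝ))) ^ (-(ν + (d : ℝ) / 2))

/-- The matrix `K_{n,m}(ρ)`, the `φ₀`-normalized covariance matrix of the preconditioned data,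
given through its spectral representation. -/
def Kmat {d : ℕ} (ν : ℝ) (N : ℕ) (D : Finset (Pt d))
    (nb : Pt d → Finset (Pt d)) (a : Pt d → Pt d → ℝ) (ρ : ℝ) :
    Matrix D D ℝ :=
  Matrix.of fun s t =>
    ρ ^ (-(2 * ν)) *
      (∫ (ω : Pt d),
        Complex.exp (Complex.I * ((inner ℝ ((t : Pt d) - (s : Pt d)) ω : ℝ) : ℂ)) *
          fN d ν N nb a (s : Pt d) ω * (starRingEnd ℂ) (fN d ν N nb a (t : Pt d) ω) *
          ((hN d ν N (ρ * ‖ω‖) : ℝ) : ℂ)).re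

/-- Block-diagonal restriction of a matrix along the partition determined by a labelling `bin`. -/
def bdiag {d : ℕ} {D : Finset (Pt d)} (bin : Pt d → ℕ) (A : Matrix D D ℝ) :
    Matrix D D ℝ :=
  Matrix.of fun s t => if bin (s : Pt d) = bin (t : Pt d) then A s t else 0

/-- `L_{n,m}(ρ) = ρ^{2ν} K_{n,m}(ρ)`. -/
def Lmat {d : ℕ} (ν : ℝ) (N : ℕ) (D : Finset (Pt d))
    (nb : Pt d → Finset (Pt d)) (a : Pt d → Pt d → ℝ) (ρ : ℝ) :
    Matrix D D ℝ :=
  ρ ^ (2 * ν) • Kmat ν N D nb a ρ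

/-- `K^B_{n,m}(ρ)`: the block-diagonal approximation of `K_{n,m}(ρ)`. -/
def KmatB {d : ℕ} (ν : ℝ) (N : ℕ) (D : Finset (Pt d))
    (nb : Pt d → Finset (Pt d)) (a : Pt d → Pt d → ℝ) (bin : Pt d → ℕ) (ρ : ℝ) :
    Matrix D D ℝ := bdiag bin (Kmat ν N D nb a ρ)

/-- `L^B_{n,m}(ρ) = ρ^{2ν} K^B_{n,m}(ρ)`. -/
def LmatB {d : ℕ} (ν : ℝ) (N : ℕ) (D : Finset (Pt d))
    (nb : Pt d → Finset (Pt d)) (a : Pt d → Pt d → ℝ) (bin : Pt d → ℕ) (ρ : ℝ) :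
    Matrix D D ℝ := bdiag bin (Lmat ν N D nb a ρ)

/-- Euclidean norm of a finite-dimensional real vector. -/
def eNorm {ι : Type*} [Fintype ι] (v : ι → ℝ) : ℝ := Real.sqrt (∑ i, (v i) ^ 2)

/-- Frobenius norm of a real matrix. -/
def frobNorm {ι : Type*} [Fintype ι] (A : Matrix ι ι ℝ) : ℝ :=
  Real.sqrt (∑ i, ∑ j, (A i j) ^ 2)

/-- The `ℓ² → ℓ²` operator (spectral) norm of a real matrix. -/
def opNorm {ι : Type*} [Fintype ι] (A : Matrix ι ι ℝ) : ℝ :=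
  sSup {c : ℝ | ∃ v : ι → ℝ, eNorm v ≤ 1 ∧ c = eNorm (A.mulVec v)}

/-- The nuclear norm (sum of singular values): trace of the psd square root of `Aᵀ A`. -/
def nucNorm {ι : Type*} [Fintype ι] [DecidableEq ι] (A : Matrix ι ι ℝ) : ℝ :=
  (let hA := Matrix.posSemidef_conjTranspose_mul_self A;
    (hA.1.eigenvectorUnitary.1 * diagonal ((RCLike.ofReal : ℝ → ℝ) ∘ Real.sqrt ∘ hA.1.eigenvalues) *
      (star hA.1.eigenvectorUnitary : Matrix ι ι ℝ))).trace

/-- The standard Gaussian product measure on `ι → ℝ`. -/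
def stdGaussianPi (ι : Type*) [Fintype ι] : Measure (ι → ℝ) :=
  Measure.pi fun _ => gaussianReal 0 1

end
example : True := trivial
lemma measurable_rpow_const_of_nonneg {α : Type*} [MeasurableSpace α] {f : α → ℝ}
    (hf : Measurable f) (hnn : ∀ x, 0 ≤ f x) {c : ℝ} (hc : c ≠ 0) :
    Measurable fun x => f x ^ c := by
  have heq : (fun x => f x ^ c) = fun x => if f x = 0 then 0 else Real.exp (Real.log (f x) * c) := by
    funext x
    by_cases h : f x = 0
    · simp [h, Real.zero_rpow hc]
    · rw [if_neg h, Real.rpow_def_of_pos (lt_of_le_of_ne (hnn x) (Ne.symm h))]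
  rw [heq]
  exact Measurable.ite (hf (measurableSet_singleton 0)) measurable_const
    (Real.measurable_exp.comp ((Real.measurable_log.comp hf).mul_const c))
lemma key_id {p c x : ℝ} (hx : 0 < x) (hc : 0 < c) :
    x ^ (-p) * x ^ (-p) * (1 + (c*x) ^ (-(2:ℝ))) ^ (-p) = c ^ (2*p) * (1 + (c*x)^2) ^ (-p) := by
  have hy : 0 < c * x := mul_pos hc hx
  have h2 : (c*x) ^ (-(2:ℝ)) = ((c*x)^2)⁻¹ := by
    rw [Real.rpow_neg hy.le, show ((2:ℝ)) = ((2:ℕ):ℝ) by norm_num, Real.rpow_natCast]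
  have h3 : (1 + ((c*x)^2)⁻¹ : ℝ) = (1 + (c*x)^2) * ((c*x)^2)⁻¹ := by
    field_simp
    ring
  have h5 : (((c*x)^2)⁻¹) ^ (-p) = (c*x) ^ (2*p) := by
    rw [← h2, ← Real.rpow_mul hy.le]
    congr 1; ring
  have h4 : (1 + (c*x) ^ (-(2:ℝ))) ^ (-p) = (1 + (c*x)^2) ^ (-p) * ((c*x) ^ (2*p)) := by
    rw [h2, h3, Real.mul_rpow (by positivity) (by positivity), h5]
  have h6 : (c*x) ^ (2*p) = c ^ (2*p) * x ^ (2*p) := Real.mul_rpow hc.le hx.le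
  have h7 : x ^ (-p) * x ^ (-p) = x ^ (-(2*p)) := by
    rw [← Real.rpow_add hx]; congr 1; ring
  have h8 : x ^ (-(2*p)) * x ^ (2*p) = 1 := by
    rw [← Real.rpow_add hx, neg_add_cancel, Real.rpow_zero]
  rw [h4, h6, h7]
  linear_combination (c ^ (2*p) * (1 + (c*x)^2) ^ (-p)) * h8
noncomputable section AuxProof
open Complex MeasureTheory

lemma hN_nonneg (d : ℕ) (ν : ℝ) (N : ℕ) {x : ℝ} (hx : 0 ≤ x) : 0 ≤ hN d ν N x := by
  unfold hN
  have h1 : (0:ℝ) ≤ ((N:ℝ) * x) ^ (-(2:ℝ)) :=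
    Real.rpow_nonneg (mul_nonneg (Nat.cast_nonneg N) hx) _
  exact Real.rpow_nonneg (by linarith) _

lemma hN_mono (d : ℕ) (ν : ℝ) (hp : 0 ≤ ν + (d:ℝ)/2) (N : ℕ) (hN0 : 0 < N) {ρ₁ ρ₂ x : ℝ}
    (hρ₁ : 0 < ρ₁) (h12 : ρ₁ ≤ ρ₂) (hx : 0 ≤ x) : hN d ν N (ρ₁ * x) ≤ hN d ν N (ρ₂ * x) := by
  rcases eq_or_lt_of_le hx with h | h
  · simp [← h]
  · unfold hN
    have hb1 : (0:ℝ) < (N:ℝ) * (ρ₁ * x) :=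
      mul_pos (by exact_mod_cast hN0) (mul_pos hρ₁ h)
    have hb2 : (N:ℝ) * (ρ₁ * x) ≤ (N:ℝ) * (ρ₂ * x) :=
      mul_le_mul_of_nonneg_left (mul_le_mul_of_nonneg_right h12 hx) (Nat.cast_nonneg N)
    have h3 : ((N:ℝ) * (ρ₂ * x)) ^ (-(2:ℝ)) ≤ ((N:ℝ) * (ρ₁ * x)) ^ (-(2:ℝ)) :=
      Real.rpow_le_rpow_of_nonpos hb1 hb2 (by norm_num)
    have h4 : (0:ℝ) ≤ ((N:ℝ) * (ρ₂ * x)) ^ (-(2:ℝ)) :=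
      Real.rpow_nonneg (le_of_lt (lt_of_lt_of_le hb1 hb2)) _
    exact Real.rpow_le_rpow_of_nonpos (by linarith) (by linarith) (by linarith)

lemma fN_zero {d : ℕ} (ν : ℝ) (hp : ν + (d:ℝ)/2 ≠ 0) (N : ℕ) (nb : Pt d → Finset (Pt d))
    (a : Pt d → Pt d → ℝ) (s : Pt d) : fN d ν N nb a s 0 = 0 := by
  unfold fN
  rw [norm_zero, Real.zero_rpow (neg_ne_zero.mpr hp)]
  simp

lemma norm_fN_le {d : ℕ} (ν : ℝ) (N : ℕ) (nb : Pt d → Finset (Pt d))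
    (a : Pt d → Pt d → ℝ) (s ω : Pt d) :
    ‖fN d ν N nb a s ω‖ ≤ ‖ω‖ ^ (-(ν + (d:ℝ)/2)) * ∑ t ∈ nb s, |a s t| := by
  unfold fN
  rw [norm_mul]
  have h1 : ‖((‖ω‖ ^ (-(ν + (d:ℝ)/2)) : ℝ) : ℂ)‖ = ‖ω‖ ^ (-(ν + (d:ℝ)/2)) := by
    rw [Complex.norm_real, Real.norm_eq_abs,
      _root_.abs_of_nonneg (Real.rpow_nonneg (norm_nonneg ω) _)]
  rw [h1]
  refine mul_le_mul_of_nonneg_left ?_ (Real.rpow_nonneg (norm_nonneg ω) _)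
  refine (norm_sum_le _ _).trans ?_
  apply Finset.sum_le_sum
  intro t _
  rw [norm_mul, Complex.norm_real, Real.norm_eq_abs]
  have h2 : ‖Complex.exp (Complex.I * ((inner ℝ ((N : ℝ) • ω) (t - s) : ℝ) : ℂ))‖ = 1 := by
    rw [Complex.norm_exp]
    simp [Complex.mul_re]
  rw [h2, mul_one]

lemma measurable_fN {d : ℕ} (ν : ℝ) (hp : ν + (d:ℝ)/2 ≠ 0) (N : ℕ) (nb : Pt d → Finset (Pt d))
    (a : Pt d → Pt d → ℝ) (s : Pt d) : Measurable fun ω : Pt d => fN d ν N nb a s ω := by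
  unfold fN
  apply Measurable.mul
  · exact Complex.measurable_ofReal.comp
      (measurable_rpow_const_of_nonneg measurable_norm (fun _ => norm_nonneg _)
        (neg_ne_zero.mpr hp))
  · have hc : Continuous fun ω : Pt d => ∑ t ∈ nb s, ((a s t : ℝ) : ℂ) *
        Complex.exp (Complex.I * ((inner ℝ ((N : ℝ) • ω) (t - s) : ℝ) : ℂ)) := by
      apply continuous_finset_sum
      intro t _
      exact continuous_const.mul (Complex.continuous_exp.comp (continuous_const.mul
        (Complex.continuous_ofReal.comp
          ((continuous_const_smul (N : ℝ) : Continuous fun ω : Pt d => (N : ℝ) • ω).inner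
            continuous_const))))
    exact hc.measurable

lemma measurable_hN_comp {d : ℕ} (ν : ℝ) (hp : ν + (d:ℝ)/2 ≠ 0) (N : ℕ) {ρ : ℝ} (hρ : 0 ≤ ρ) :
    Measurable fun ω : Pt d => hN d ν N (ρ * ‖ω‖) := by
  unfold hN
  have h1 : Measurable fun ω : Pt d => ((N:ℝ) * (ρ * ‖ω‖)) ^ (-(2:ℝ)) :=
    measurable_rpow_const_of_nonneg ((measurable_norm.const_mul ρ).const_mul (N:ℝ))
      (fun ω => mul_nonneg (Nat.cast_nonneg N) (mul_nonneg hρ (norm_nonneg ω))) (by norm_num)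
  refine measurable_rpow_const_of_nonneg (h1.const_add 1) (fun ω => ?_) (neg_ne_zero.mpr hp)
  have := Real.rpow_nonneg (mul_nonneg (Nat.cast_nonneg N) (mul_nonneg hρ (norm_nonneg ω))) (-(2:ℝ))
  linarith

end AuxProof
noncomputable section AuxProof2
open Complex MeasureTheory

def Fker (d : ℕ) (ν : ℝ) (N : ℕ) (nb : Pt d → Finset (Pt d)) (a : Pt d → Pt d → ℝ)
    (ρ : ℝ) (s t ω : Pt d) : ℂ :=
  Complex.exp (Complex.I * ((inner ℝ (t - s) ω : ℝ) : ℂ)) * fN d ν N nb a s ω *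
    (starRingEnd ℂ) (fN d ν N nb a t ω) * ((hN d ν N (ρ * ‖ω‖) : ℝ) : ℂ)

lemma Lmat_apply {d : ℕ} (ν : ℝ) (N : ℕ) (D : Finset (Pt d)) (nb : Pt d → Finset (Pt d))
    (a : Pt d → Pt d → ℝ) {ρ : ℝ} (hρ : 0 < ρ) (s t : {x // x ∈ D}) :
    Lmat ν N D nb a ρ s t = (∫ ω : Pt d, Fker d ν N nb a ρ (s : Pt d) (t : Pt d) ω).re := by
  show ρ ^ (2*ν) * (ρ ^ (-(2*ν)) * _) = _
  rw [← mul_assoc, ← Real.rpow_add hρ, add_neg_cancel, Real.rpow_zero, one_mul]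
  rfl

lemma Fker_conj {d : ℕ} (ν : ℝ) (N : ℕ) (nb : Pt d → Finset (Pt d)) (a : Pt d → Pt d → ℝ)
    (ρ : ℝ) (s t ω : Pt d) :
    Fker d ν N nb a ρ t s ω = (starRingEnd ℂ) (Fker d ν N nb a ρ s t ω) := by
  unfold Fker
  rw [_root_.map_mul, _root_.map_mul, _root_.map_mul, ← Complex.exp_conj, Complex.conj_conj,
    Complex.conj_ofReal, _root_.map_mul, Complex.conj_I]
  have hinner : (inner ℝ (s - t) ω : ℝ) = -(inner ℝ (t - s) ω : ℝ) := by
    rw [inner_sub_left, inner_sub_left]; ring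
  rw [hinner]
  push_cast
  rw [Complex.conj_ofReal]
  ring_nf
noncomputable section AuxProof3
open Complex MeasureTheory

lemma integrable_Fker {d : ℕ} (hd : 1 ≤ d) {ν : ℝ} (hν : 0 < ν) {N : ℕ} (hN0 : 0 < N)
    (nb : Pt d → Finset (Pt d)) (a : Pt d → Pt d → ℝ) {ρ : ℝ} (hρ : 0 < ρ) (s t : Pt d) :
    Integrable (fun ω : Pt d => Fker d ν N nb a ρ s t ω) := by
  have hp : 0 < ν + (d:ℝ)/2 := by positivity
  set c : ℝ := (N:ℝ) * ρ with hcdef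
  have hc : 0 < c := mul_pos (by exact_mod_cast hN0) hρ
  -- measurability
  have hmeas : Measurable fun ω : Pt d => Fker d ν N nb a ρ s t ω := by
    unfold Fker
    refine ((Measurable.mul (Measurable.mul ?_ (measurable_fN ν hp.ne' N nb a s))
      ((RCLike.continuous_conj (K := ℂ)).measurable.comp (measurable_fN ν hp.ne' N nb a t))) ).mul
      (Complex.measurable_ofReal.comp (measurable_hN_comp ν hp.ne' N hρ.le))
    have : Continuous fun ω : Pt d => Complex.exp (Complex.I * ((inner ℝ (t - s) ω : ℝ) : ℂ)) :=
      Complex.continuous_exp.comp (continuous_const.mul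
        (Complex.continuous_ofReal.comp (continuous_const.inner continuous_id)))
    exact this.measurable
  -- the integrable majorant
  have hbase : Integrable (fun v : Pt d => (1 + ‖v‖^2) ^ (-(2*(ν + (d:ℝ)/2))/2)) := by
    apply integrable_rpow_neg_one_add_norm_sq
    rw [finrank_euclideanSpace_fin]
    linarith
  have hcomp : Integrable (fun ω : Pt d => (1 + (c*‖ω‖)^2) ^ (-(ν + (d:ℝ)/2))) := by
    have h1 := hbase.comp_smul (R := c) hc.ne'
    have heq : (fun ω : Pt d => (1 + (c*‖ω‖)^2) ^ (-(ν + (d:ℝ)/2)))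
        = fun ω : Pt d => (1 + ‖c • ω‖^2) ^ (-(2*(ν + (d:ℝ)/2))/2) := by
      funext ω
      rw [norm_smul, Real.norm_eq_abs, abs_of_pos hc]
      congr 1
      ring
    rw [heq]
    exact h1
  set Ca : Pt d → ℝ := fun u => ∑ v ∈ nb u, |a u v| with hCa
  have hCa0 : ∀ u, 0 ≤ Ca u := fun u => Finset.sum_nonneg fun _ _ => abs_nonneg _
  refine ((hcomp.const_mul (Ca s * Ca t * c ^ (2*(ν + (d:ℝ)/2)))).mono'
    hmeas.aestronglyMeasurable (Filter.Eventually.of_forall fun ω => ?_))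
  by_cases hω : ω = 0
  · have h0 : Fker d ν N nb a ρ s t ω = 0 := by
      subst hω
      unfold Fker
      rw [fN_zero ν hp.ne' N nb a s]
      ring
    rw [h0, norm_zero]
    have : (0:ℝ) ≤ (1 + (c*‖ω‖)^2) ^ (-(ν + (d:ℝ)/2)) := Real.rpow_nonneg (by positivity) _
    have h2 : (0:ℝ) ≤ c ^ (2*(ν + (d:ℝ)/2)) := Real.rpow_nonneg hc.le _
    exact mul_nonneg (mul_nonneg (mul_nonneg (hCa0 s) (hCa0 t)) h2) this
  · have hx : 0 < ‖ω‖ := norm_pos_iff.mpr hω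
    have hnorm : ‖Fker d ν N nb a ρ s t ω‖
        = ‖fN d ν N nb a s ω‖ * ‖fN d ν N nb a t ω‖ * hN d ν N (ρ*‖ω‖) := by
      unfold Fker
      rw [norm_mul, norm_mul, norm_mul]
      have he : ‖Complex.exp (Complex.I * ((inner ℝ (t - s) ω : ℝ):ℂ))‖ = 1 := by
        rw [Complex.norm_exp]
        simp [Complex.mul_re]
      have hconj : ‖(starRingEnd ℂ) (fN d ν N nb a t ω)‖ = ‖fN d ν N nb a t ω‖ := by
        rw [Complex.norm_conj]
      have hh : ‖((hN d ν N (ρ*‖ω‖) : ℝ) : ℂ)‖ = hN d ν N (ρ*‖ω‖) := by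
        rw [Complex.norm_real, Real.norm_eq_abs,
          _root_.abs_of_nonneg (hN_nonneg d ν N (by positivity))]
      rw [he, one_mul, hconj, hh]
    rw [hnorm]
    have h1 := norm_fN_le ν N nb a s ω
    have h2 := norm_fN_le ν N nb a t ω
    have hhn : 0 ≤ hN d ν N (ρ*‖ω‖) := hN_nonneg d ν N (by positivity)
    calc ‖fN d ν N nb a s ω‖ * ‖fN d ν N nb a t ω‖ * hN d ν N (ρ*‖ω‖)
        ≤ (‖ω‖ ^ (-(ν + (d:ℝ)/2)) * Ca s) * (‖ω‖ ^ (-(ν + (d:ℝ)/2)) * Ca t)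
            * hN d ν N (ρ*‖ω‖) := by
          refine mul_le_mul_of_nonneg_right (mul_le_mul h1 h2 (norm_nonneg _) ?_) hhn
          exact mul_nonneg (Real.rpow_nonneg (norm_nonneg _) _) (hCa0 s)
      _ = Ca s * Ca t * (‖ω‖ ^ (-(ν + (d:ℝ)/2)) * ‖ω‖ ^ (-(ν + (d:ℝ)/2))
            * ((1 + (c*‖ω‖) ^ (-(2:ℝ))) ^ (-(ν + (d:ℝ)/2)))) := by
          have harg : (N:ℝ) * (ρ * ‖ω‖) = c * ‖ω‖ := by rw [hcdef]; ring
          unfold hN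
          rw [harg]
          ring
      _ = Ca s * Ca t * (c ^ (2*(ν + (d:ℝ)/2)) * (1 + (c*‖ω‖)^2) ^ (-(ν + (d:ℝ)/2))) := by
          rw [key_id hx hc]
      _ = Ca s * Ca t * c ^ (2*(ν + (d:ℝ)/2)) * (1 + (c*‖ω‖)^2) ^ (-(ν + (d:ℝ)/2)) := by
          ring

end AuxProof3
noncomputable section AuxProof4
open Complex MeasureTheory

lemma bdiag_posSemidef {d : ℕ} {D : Finset (Pt d)} (bin : Pt d → ℕ)
    {A : Matrix {x // x ∈ D} {x // x ∈ D} ℝ} (hA : A.PosSemidef) :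
    (bdiag bin A).PosSemidef := by
  classical
  have hsym : ∀ s t : {x // x ∈ D}, A t s = A s t := by
    intro s t
    have h := congrFun (congrFun hA.1 s) t
    simpa [Matrix.conjTranspose_apply] using h
  rw [Matrix.posSemidef_iff_dotProduct_mulVec]
  constructor
  · ext s t
    simp only [Matrix.conjTranspose_apply, bdiag, Matrix.of_apply, star_trivial]
    by_cases h : bin (s : Pt d) = bin (t : Pt d)
    · rw [if_pos h.symm, if_pos h, hsym]
    · rw [if_neg (fun hh => h hh.symm), if_neg h]
  · intro x
    set I : Finset ℕ := Finset.image (fun s : {x // x ∈ D} => bin (s : Pt d)) Finset.univ with hI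
    have hper : ∀ s : {x // x ∈ D},
        ∑ k ∈ I, ((if bin (s : Pt d) = k then x s else 0) *
          ∑ t : {x // x ∈ D}, A s t * (if bin (t : Pt d) = k then x t else 0))
        = x s * ∑ t : {x // x ∈ D}, (if bin (s : Pt d) = bin (t : Pt d) then A s t else 0) * x t := by
      intro s
      have h1 : ∀ k, ((if bin (s : Pt d) = k then x s else 0) *
          ∑ t : {x // x ∈ D}, A s t * (if bin (t : Pt d) = k then x t else 0))
          = if bin (s : Pt d) = k then
              (x s * ∑ t : {x // x ∈ D}, A s t * (if bin (t : Pt d) = k then x t else 0)) else 0 := by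
        intro k; split <;> simp
      rw [Finset.sum_congr rfl fun k _ => h1 k, Finset.sum_ite_eq,
        if_pos (Finset.mem_image_of_mem _ (Finset.mem_univ s))]
      congr 1
      refine Finset.sum_congr rfl fun t _ => ?_
      by_cases h : bin (s : Pt d) = bin (t : Pt d)
      · rw [if_pos h.symm, if_pos h]
      · rw [if_neg (fun hh => h hh.symm), if_neg h]
        simp
    have key : star x ⬝ᵥ (bdiag bin A).mulVec x
        = ∑ k ∈ I, star (fun s : {x // x ∈ D} => if bin (s : Pt d) = k then x s else 0) ⬝ᵥ
            A.mulVec (fun s : {x // x ∈ D} => if bin (s : Pt d) = k then x s else 0) := by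
      simp only [dotProduct, Matrix.mulVec, Pi.star_apply, star_trivial, bdiag,
        Matrix.of_apply]
      rw [Finset.sum_comm]
      exact (Finset.sum_congr rfl fun s _ => (hper s)).symm
    rw [key]
    exact Finset.sum_nonneg fun k _ => hA.dotProduct_mulVec_nonneg _

end AuxProof4
noncomputable section AuxProof5
open Complex MeasureTheory

lemma lmat_diff_posSemidef {d : ℕ} (hd : 1 ≤ d) {ν : ℝ} (hν : 0 < ν) {N : ℕ} (hN0 : 0 < N)
    (D : Finset (Pt d)) (nb : Pt d → Finset (Pt d)) (a : Pt d → Pt d → ℝ)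
    {ρ₁ ρ₂ : ℝ} (hρ₁ : 0 < ρ₁) (h12 : ρ₁ ≤ ρ₂) :
    (Lmat ν N D nb a ρ₂ - Lmat ν N D nb a ρ₁).PosSemidef := by
  classical
  have hρ₂ : 0 < ρ₂ := lt_of_lt_of_le hρ₁ h12
  have hp : 0 < ν + (d:ℝ)/2 := by positivity
  have hInt : ∀ ρ : ℝ, 0 < ρ → ∀ s t : Pt d,
      Integrable (fun ω : Pt d => Fker d ν N nb a ρ s t ω) :=
    fun ρ hρ s t => integrable_Fker hd hν hN0 nb a hρ s t
  have hsym : ∀ ρ : ℝ, ∀ s t : Pt d,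
      (∫ ω : Pt d, Fker d ν N nb a ρ t s ω).re = (∫ ω : Pt d, Fker d ν N nb a ρ s t ω).re := by
    intro ρ s t
    have h1 : (fun ω : Pt d => Fker d ν N nb a ρ t s ω)
        = fun ω : Pt d => (starRingEnd ℂ) (Fker d ν N nb a ρ s t ω) :=
      funext fun ω => Fker_conj ν N nb a ρ s t ω
    rw [h1, integral_conj, Complex.conj_re]
  rw [Matrix.posSemidef_iff_dotProduct_mulVec]
  constructor
  · ext s t
    simp only [Matrix.conjTranspose_apply, Matrix.sub_apply, star_trivial]
    rw [Lmat_apply ν N D nb a hρ₂, Lmat_apply ν N D nb a hρ₁,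
      Lmat_apply ν N D nb a hρ₂, Lmat_apply ν N D nb a hρ₁, hsym ρ₂, hsym ρ₁]
  · intro x
    set g : Pt d → Pt d → ℂ :=
      fun u ω => Complex.exp (-(Complex.I * ((inner ℝ u ω : ℝ) : ℂ))) * fN d ν N nb a u ω with hg
    set w : Pt d → ℝ := fun ω => hN d ν N (ρ₂ * ‖ω‖) - hN d ν N (ρ₁ * ‖ω‖) with hw
    have hw0 : ∀ ω : Pt d, 0 ≤ w ω := fun ω =>
      sub_nonneg.mpr (hN_mono d ν hp.le N hN0 hρ₁ h12 (norm_nonneg ω))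
    have hFg : ∀ (ρ : ℝ) (s t ω : Pt d), Fker d ν N nb a ρ s t ω
        = g s ω * (starRingEnd ℂ) (g t ω) * ((hN d ν N (ρ * ‖ω‖) : ℝ) : ℂ) := by
      intro ρ s t ω
      unfold Fker
      simp only [hg, _root_.map_mul, map_neg, Complex.conj_I, Complex.conj_ofReal,
        ← Complex.exp_conj, neg_mul, neg_neg]
      have harg : Complex.I * ((inner ℝ (t - s) ω : ℝ) : ℂ)
          = -(Complex.I * ((inner ℝ s ω : ℝ) : ℂ)) + Complex.I * ((inner ℝ t ω : ℝ) : ℂ) := by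
        rw [inner_sub_left]
        push_cast
        ring
      rw [harg, Complex.exp_add]
      ring
    -- pointwise identity for the quadratic form integrand
    have hpoint : ∀ ω : Pt d,
        (∑ s : {y // y ∈ D}, ∑ t : {y // y ∈ D}, ((x s * x t : ℝ) : ℂ) *
          (Fker d ν N nb a ρ₂ (s : Pt d) (t : Pt d) ω - Fker d ν N nb a ρ₁ (s : Pt d) (t : Pt d) ω))
        = ((Complex.normSq (∑ s : {y // y ∈ D}, ((x s : ℝ) : ℂ) * g (s : Pt d) ω) * w ω : ℝ) : ℂ) := by
      intro ω
      have hterm : ∀ s t : {y // y ∈ D}, ((x s * x t : ℝ) : ℂ) *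
          (Fker d ν N nb a ρ₂ (s : Pt d) (t : Pt d) ω - Fker d ν N nb a ρ₁ (s : Pt d) (t : Pt d) ω)
          = (((x s : ℝ) : ℂ) * g (s : Pt d) ω) *
            (starRingEnd ℂ) (((x t : ℝ) : ℂ) * g (t : Pt d) ω) * ((w ω : ℝ) : ℂ) := by
        intro s t
        rw [hFg ρ₂, hFg ρ₁]
        simp only [hw, _root_.map_mul, Complex.conj_ofReal]
        push_cast
        ring
      rw [Finset.sum_congr rfl fun s _ => Finset.sum_congr rfl fun t _ => hterm s t]
      have hsum : ∑ s : {y // y ∈ D}, ∑ t : {y // y ∈ D},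
          ((((x s : ℝ) : ℂ) * g (s : Pt d) ω) *
            (starRingEnd ℂ) (((x t : ℝ) : ℂ) * g (t : Pt d) ω) * ((w ω : ℝ) : ℂ))
          = (∑ s : {y // y ∈ D}, ((x s : ℝ) : ℂ) * g (s : Pt d) ω) *
            (starRingEnd ℂ) (∑ t : {y // y ∈ D}, ((x t : ℝ) : ℂ) * g (t : Pt d) ω) *
              ((w ω : ℝ) : ℂ) := by
        simp only [map_sum, Finset.sum_mul, Finset.mul_sum]
        exact Finset.sum_comm
      rw [hsum, Complex.mul_conj]
      push_cast
      ring
    -- entry formula for the difference matrix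
    have hentry : ∀ s t : {y // y ∈ D},
        (Lmat ν N D nb a ρ₂ - Lmat ν N D nb a ρ₁) s t
        = (∫ ω : Pt d, (Fker d ν N nb a ρ₂ (s : Pt d) (t : Pt d) ω
            - Fker d ν N nb a ρ₁ (s : Pt d) (t : Pt d) ω)).re := by
      intro s t
      rw [Matrix.sub_apply, Lmat_apply ν N D nb a hρ₂, Lmat_apply ν N D nb a hρ₁,
        integral_sub (hInt ρ₂ hρ₂ _ _) (hInt ρ₁ hρ₁ _ _), Complex.sub_re]
    have hIsub : ∀ s t : {y // y ∈ D}, Integrable (fun ω : Pt d =>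
        ((x s * x t : ℝ) : ℂ) * (Fker d ν N nb a ρ₂ (s : Pt d) (t : Pt d) ω
          - Fker d ν N nb a ρ₁ (s : Pt d) (t : Pt d) ω)) := fun s t =>
      ((hInt ρ₂ hρ₂ _ _).sub (hInt ρ₁ hρ₁ _ _)).const_mul _
    have hQ : star x ⬝ᵥ (Lmat ν N D nb a ρ₂ - Lmat ν N D nb a ρ₁).mulVec x
        = ∫ ω : Pt d, Complex.normSq (∑ s : {y // y ∈ D}, ((x s : ℝ) : ℂ) * g (s : Pt d) ω) * w ω := by
      have hstar : star x = x := funext fun i => star_trivial _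
      calc star x ⬝ᵥ (Lmat ν N D nb a ρ₂ - Lmat ν N D nb a ρ₁).mulVec x
          = ∑ s : {y // y ∈ D}, ∑ t : {y // y ∈ D},
              (((x s * x t : ℝ) : ℂ) * ∫ ω : Pt d, (Fker d ν N nb a ρ₂ (s : Pt d) (t : Pt d) ω
                - Fker d ν N nb a ρ₁ (s : Pt d) (t : Pt d) ω)).re := by
            simp only [dotProduct, Matrix.mulVec, hstar, Finset.mul_sum]
            refine Finset.sum_congr rfl fun s _ => Finset.sum_congr rfl fun t _ => ?_
            rw [hentry s t]
            simp [Complex.mul_re]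
            ring
        _ = (∑ s : {y // y ∈ D}, ∑ t : {y // y ∈ D},
              ∫ ω : Pt d, ((x s * x t : ℝ) : ℂ) * (Fker d ν N nb a ρ₂ (s : Pt d) (t : Pt d) ω
                - Fker d ν N nb a ρ₁ (s : Pt d) (t : Pt d) ω)).re := by
            rw [Complex.re_sum]
            refine Finset.sum_congr rfl fun s _ => ?_
            rw [Complex.re_sum]
            refine Finset.sum_congr rfl fun t _ => ?_
            rw [integral_const_mul]
        _ = (∫ ω : Pt d, ∑ s : {y // y ∈ D}, ∑ t : {y // y ∈ D},
              ((x s * x t : ℝ) : ℂ) * (Fker d ν N nb a ρ₂ (s : Pt d) (t : Pt d) ω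
                - Fker d ν N nb a ρ₁ (s : Pt d) (t : Pt d) ω)).re := by
            rw [integral_finset_sum _ fun s _ => integrable_finset_sum _ fun t _ => hIsub s t]
            congr 1
            refine Finset.sum_congr rfl fun s _ => ?_
            rw [integral_finset_sum _ fun t _ => hIsub s t]
        _ = ∫ ω : Pt d, (∑ s : {y // y ∈ D}, ∑ t : {y // y ∈ D},
              ((x s * x t : ℝ) : ℂ) * (Fker d ν N nb a ρ₂ (s : Pt d) (t : Pt d) ω
                - Fker d ν N nb a ρ₁ (s : Pt d) (t : Pt d) ω)).re := by
            exact (integral_re (integrable_finset_sum _ fun s _ =>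
              integrable_finset_sum _ fun t _ => hIsub s t)).symm
        _ = ∫ ω : Pt d, Complex.normSq (∑ s : {y // y ∈ D}, ((x s : ℝ) : ℂ) * g (s : Pt d) ω)
              * w ω := by
            refine integral_congr_ae (Filter.Eventually.of_forall fun ω => ?_)
            dsimp only
            rw [hpoint ω]
            exact Complex.ofReal_re _
    rw [hQ]
    exact integral_nonneg fun ω => mul_nonneg (Complex.normSq_nonneg _) (hw0 ω)

end AuxProof5
/-- **Monotonicity claim (Eq. (B.8) in the proof of Lemma B.3).**  For `ρ₁ ≤ ρ₂` in `Θ₀` and any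
partition of `Dₙ` (encoded by a labelling `bin`), the matrix
`Δ^B(ρ₁,ρ₂) = L^B_{n,m}(ρ₂) - L^B_{n,m}(ρ₁)` is symmetric positive semidefinite; i.e.
`ρ ↦ L^B_{n,m}(ρ)` is nondecreasing on `Θ₀` in the Loewner order. -/
theorem stmt7 (d m n : ℕ) (ν c₀ : ℝ) (Θ₀ : Set ℝ)
    (D : Finset (Pt d)) (nb : Pt d → Finset (Pt d)) (a : Pt d → Pt d → ℝ) (bin : Pt d → ℕ)
    (hd : 1 ≤ d) (hν : 0 < ν) (hm : ν + (d : ℝ) / 2 ≤ (m : ℝ)) (hc₀ : 0 < c₀)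
    (hΘ : IsCompact Θ₀) (hΘ0 : Θ₀ ⊆ Set.Ioi 0)
    (hD : D.card = n)
    (hPC : PrecondCoeffs d m c₀ (Nof d n) D nb a) :
    ∀ ρ₁ ∈ Θ₀, ∀ ρ₂ ∈ Θ₀, ρ₁ ≤ ρ₂ →
      (LmatB ν (Nof d n) D nb a bin ρ₂ - LmatB ν (Nof d n) D nb a bin ρ₁).PosSemidef := by
  intro ρ₁ hρ₁m ρ₂ hρ₂m hle
  have hρ₁0 : 0 < ρ₁ := hΘ0 hρ₁m
  by_cases hDe : D = ∅
  · haveI : IsEmpty {x // x ∈ D} := Finset.isEmpty_coe_sort.mpr hDe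
    rw [Matrix.posSemidef_iff_dotProduct_mulVec]
    constructor
    · ext s t
      exact isEmptyElim s
    · intro x
      simp [dotProduct]
  · have hne : D.Nonempty := Finset.nonempty_iff_ne_empty.mpr hDe
    have hn1 : 1 ≤ n := by
      rw [← hD]; exact Finset.card_pos.mpr hne
    have hN1 : 0 < Nof d n := by
      have h1 : (1:ℝ) ≤ (n:ℝ) ^ ((1:ℝ)/(d:ℝ)) :=
        Real.one_le_rpow (by exact_mod_cast hn1) (by positivity)
      exact Nat.le_floor (by exact_mod_cast h1)
    have hdiff : LmatB ν (Nof d n) D nb a bin ρ₂ - LmatB ν (Nof d n) D nb a bin ρ₁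
        = bdiag bin (Lmat ν (Nof d n) D nb a ρ₂ - Lmat ν (Nof d n) D nb a ρ₁) := by
      ext s t
      simp only [LmatB, bdiag, Matrix.sub_apply, Matrix.of_apply]
      by_cases h : bin (s : Pt d) = bin (t : Pt d) <;> simp [h]
    rw [hdiff]
    exact bdiag_posSemidef bin (lmat_diff_posSemidef hd hν hN1 D nb a hρ₁0 hle)
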